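/- For a complete graph K_n with sorted thresholds t(v_1) ≤ ... ≤ t(v_n), the optimal values satisfy the recurrence Opt_ℓ(m) = min over 1 ≤ j ≤ m of ( Opt_{ℓ-1}(j) + Σ_{i=j+1}^m max{0, t(v_i) − j} ), for all 1 ≤ m ≤ n and 1 ≤ ℓ ≤ λ. -/

import Mathlib

open Finset

/-- Influence process on a complete graph with node set `{0,…,m-1}`, thresholds `t`,
incentives `p`: at round 0 exactly the nodes with `p v = t v` are influenced; afterwards
a node is influenced once the number of already influenced other nodes reaches `t v - p v`. -/
def kInfl (m : ℕ) (t p : ℕ → ℕ) : ℕ → Finset ℕ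
  | 0 => (range m).filter fun v => p v = t v
  | ℓ + 1 => kInfl m t p ℓ ∪ (range m).filter fun v =>
      t v - p v ≤ ((kInfl m t p ℓ).erase v).card

/-- `kOpt t ℓ m`: minimum total incentive influencing all of the complete graph on
`{0,…,m-1}` within `ℓ` rounds. -/
noncomputable def kOpt (t : ℕ → ℕ) (ℓ m : ℕ) : ℕ :=
  sInf {c : ℕ | ∃ p : ℕ → ℕ, (∀ v < m, p v ≤ t v) ∧
    kInfl m t p ℓ = range m ∧ c = ∑ v ∈ range m, p v}

lemma kInfl_zero (m : ℕ) (t p : ℕ → ℕ) :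
    kInfl m t p 0 = (range m).filter fun v => p v = t v := rfl

lemma kInfl_succ (m : ℕ) (t p : ℕ → ℕ) (ℓ : ℕ) :
    kInfl m t p (ℓ+1) = kInfl m t p ℓ ∪ (range m).filter fun v =>
      t v - p v ≤ ((kInfl m t p ℓ).erase v).card := rfl

lemma kInfl_subset_range (m : ℕ) (t p : ℕ → ℕ) : ∀ ℓ, kInfl m t p ℓ ⊆ range m
  | 0 => filter_subset _ _
  | ℓ + 1 => union_subset (kInfl_subset_range m t p ℓ) (filter_subset _ _)

lemma kInfl_mono (m : ℕ) (t p : ℕ → ℕ) {a b : ℕ} (h : a ≤ b) :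
    kInfl m t p a ⊆ kInfl m t p b := by
  induction h with
  | refl => exact Finset.Subset.refl _
  | step h ih => exact ih.trans (by rw [kInfl_succ]; exact subset_union_left)

lemma kInfl_def_le (m : ℕ) (t p : ℕ → ℕ) :
    ∀ r v, v ∈ kInfl m t p r → t v - p v ≤ ((kInfl m t p r).erase v).card := by
  intro r
  induction r with
  | zero =>
    intro v hv
    rw [kInfl_zero, mem_filter] at hv
    omega
  | succ r ih =>
    intro v hv
    have hsub : kInfl m t p r ⊆ kInfl m t p (r+1) := kInfl_mono m t p (Nat.le_succ r)
    rw [kInfl_succ, mem_union] at hv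
    rcases hv with h | h
    · exact (ih v h).trans (card_le_card (erase_subset_erase _ hsub))
    · rw [mem_filter] at h
      exact h.2.trans (card_le_card (erase_subset_erase _ hsub))

lemma kInfl_self (m : ℕ) (t : ℕ → ℕ) : ∀ ℓ, kInfl m t t ℓ = range m
  | 0 => by simp [kInfl_zero]
  | ℓ + 1 => by
    rw [kInfl_succ, kInfl_self m t ℓ, union_eq_left]
    exact filter_subset _ _

lemma kOpt_mem (t : ℕ → ℕ) (ℓ m : ℕ) :
    ∃ p : ℕ → ℕ, (∀ v < m, p v ≤ t v) ∧ kInfl m t p ℓ = range m ∧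
      kOpt t ℓ m = ∑ v ∈ range m, p v := by
  have hne : {c : ℕ | ∃ p : ℕ → ℕ, (∀ v < m, p v ≤ t v) ∧
      kInfl m t p ℓ = range m ∧ c = ∑ v ∈ range m, p v}.Nonempty :=
    ⟨∑ v ∈ range m, t v, t, fun v _ => le_rfl, kInfl_self m t ℓ, rfl⟩
  exact Nat.sInf_mem hne

lemma kOpt_le (t : ℕ → ℕ) (ℓ m : ℕ) (p : ℕ → ℕ) (hp : ∀ v < m, p v ≤ t v)
    (hfull : kInfl m t p ℓ = range m) : kOpt t ℓ m ≤ ∑ v ∈ range m, p v :=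
  Nat.sInf_le ⟨p, hp, hfull, rfl⟩

lemma kInfl_mono_graph (t p₁ p₂ : ℕ → ℕ) {m₁ m₂ : ℕ} (hm : m₁ ≤ m₂)
    (hp : ∀ v < m₁, p₁ v = p₂ v) : ∀ r, kInfl m₁ t p₁ r ⊆ kInfl m₂ t p₂ r := by
  intro r; induction r with
  | zero =>
    intro x hx
    rw [kInfl_zero, mem_filter, mem_range] at hx ⊢
    exact ⟨hx.1.trans_le hm, (hp x hx.1) ▸ hx.2⟩
  | succ r ih =>
    intro x hx
    rw [kInfl_succ, mem_union] at hx ⊢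
    rcases hx with h | h
    · exact Or.inl (ih h)
    · rw [mem_filter, mem_range] at h
      refine Or.inr ?_
      rw [mem_filter, mem_range]
      refine ⟨h.1.trans_le hm, ?_⟩
      rw [← hp x h.1]
      exact h.2.trans (card_le_card (erase_subset_erase _ (fun y hy => ih hy)))

lemma kInfl_restrict (m j : ℕ) (t p : ℕ → ℕ) (R : ℕ)
    (hR : kInfl m t p R ⊆ range j) :
    ∀ r ≤ R, kInfl m t p r ⊆ kInfl j t p r := by
  intro r
  induction r with
  | zero =>
    intro _ x hx
    have hxj : x ∈ range j := hR (kInfl_mono m t p (Nat.zero_le R) hx)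
    rw [kInfl_zero, mem_filter] at hx ⊢
    exact ⟨hxj, hx.2⟩
  | succ r ih =>
    intro hr x hx
    have hxj : x ∈ range j := hR (kInfl_mono m t p hr hx)
    have ih' := ih (Nat.le_of_succ_le hr)
    rw [kInfl_succ, mem_union] at hx ⊢
    rcases hx with h | h
    · exact Or.inl (ih' h)
    · rw [mem_filter] at h
      refine Or.inr ?_
      rw [mem_filter]
      exact ⟨hxj, h.2.trans (card_le_card (erase_subset_erase _ (fun y hy => ih' hy)))⟩

lemma mem_image_swap (s : Finset ℕ) (v w x : ℕ) :
    x ∈ s.image (Equiv.swap v w) ↔ Equiv.swap v w x ∈ s := by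
  constructor
  · rintro h
    obtain ⟨a, ha, rfl⟩ := mem_image.1 h
    rwa [Equiv.swap_apply_self]
  · intro h
    exact mem_image.2 ⟨_, h, Equiv.swap_apply_self _ _ _⟩

lemma kInfl_swap (m : ℕ) (t p p' : ℕ → ℕ) (v w : ℕ) (hvm : v < m) (hwm : w < m)
    (hpw : p' w ≤ t w) (hdw : t w - p' w ≤ t v - p v)
    (hagree : ∀ x, x ≠ v → x ≠ w → p' x = p x) :
    ∀ r, w ∉ kInfl m t p r →
      (kInfl m t p r).image (Equiv.swap v w) ⊆ kInfl m t p' r := by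
  intro r
  induction r with
  | zero =>
    intro hw y hy
    obtain ⟨x, hx, rfl⟩ := mem_image.1 hy
    have hxw : x ≠ w := fun h => hw (h ▸ hx)
    rw [kInfl_zero, mem_filter] at hx
    rcases eq_or_ne x v with rfl | hxv
    · rw [Equiv.swap_apply_left]
      rw [kInfl_zero, mem_filter, mem_range]
      have : p' w = t w := by
        have h0 : t x - p x = 0 := by omega
        omega
      exact ⟨hwm, this⟩
    · rw [Equiv.swap_apply_of_ne_of_ne hxv hxw]
      rw [kInfl_zero, mem_filter]
      exact ⟨hx.1, (hagree x hxv hxw) ▸ hx.2⟩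
  | succ r ih =>
    intro hw y hy
    have hw' : w ∉ kInfl m t p r := fun h => hw (kInfl_mono m t p (Nat.le_succ r) h)
    obtain ⟨x, hx, rfl⟩ := mem_image.1 hy
    have hxw : x ≠ w := fun h => hw (h ▸ hx)
    rw [kInfl_succ, mem_union] at hx
    rcases hx with h | h
    · rw [kInfl_succ]
      exact mem_union_left _ (ih hw' (mem_image_of_mem _ h))
    · rw [mem_filter, mem_range] at h
      have hcard : ((kInfl m t p r).erase x).card ≤
          ((kInfl m t p' r).erase (Equiv.swap v w x)).card := by
        have h1 : ((kInfl m t p r).erase x).image (Equiv.swap v w) =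
            ((kInfl m t p r).image (Equiv.swap v w)).erase (Equiv.swap v w x) :=
          Finset.image_erase (Equiv.injective _) _ _
        have h2 : (((kInfl m t p r).erase x).image (Equiv.swap v w)).card =
            ((kInfl m t p r).erase x).card :=
          card_image_of_injective _ (Equiv.injective _)
        rw [← h2, h1]
        exact card_le_card (erase_subset_erase _ (ih hw'))
      rw [kInfl_succ]
      refine mem_union_right _ ?_
      rw [mem_filter, mem_range]
      rcases eq_or_ne x v with rfl | hxv
      · rw [Equiv.swap_apply_left] at hcard ⊢
        exact ⟨hwm, le_trans (hdw.trans h.2) hcard⟩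
      · rw [Equiv.swap_apply_of_ne_of_ne hxv hxw] at hcard ⊢
        rw [hagree x hxv hxw]
        exact ⟨h.1, h.2.trans hcard⟩

lemma sum_two_point (s : Finset ℕ) (f : ℕ → ℕ) (v w : ℕ) (hv : v ∈ s) (hw : w ∈ s)
    (hvw : v ≠ w) :
    ∑ x ∈ s, f x = f v + f w + ∑ x ∈ (s.erase v).erase w, f x := by
  rw [← Finset.add_sum_erase _ f hv,
    ← Finset.add_sum_erase _ f (mem_erase.2 ⟨hvw.symm, hw⟩ : w ∈ s.erase v)]
  ring

lemma exchange (m ℓ : ℕ) (t p : ℕ → ℕ) (hp : ∀ x < m, p x ≤ t x)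
    (hfull : kInfl m t p (ℓ+1) = range m)
    (v w : ℕ) (hwv : w < v) (hvm : v < m)
    (hvS : v ∈ kInfl m t p ℓ) (hwS : w ∉ kInfl m t p ℓ)
    (htw : t w ≤ t v) :
    ∃ p' : ℕ → ℕ, (∀ x < m, p' x ≤ t x) ∧ kInfl m t p' (ℓ+1) = range m ∧
      (∑ x ∈ range m, p' x) = ∑ x ∈ range m, p x ∧
      (∑ x ∈ range m \ kInfl m t p' ℓ, (m - x)) <
        ∑ x ∈ range m \ kInfl m t p ℓ, (m - x) := by
  have hwm : w < m := hwv.trans hvm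
  have hvw : v ≠ w := (Nat.ne_of_lt hwv).symm
  have hpv : p v ≤ t v := hp v hvm
  have hpw : p w ≤ t w := hp w hwm
  set e : ℕ := min (t v - p v) (t w) with he
  have he1 : e ≤ t v - p v := min_le_left _ _
  have he2 : e ≤ t w := min_le_right _ _
  have he3 : e = t v - p v ∨ e = t w := min_choice _ _
  set p' : ℕ → ℕ := fun x => if x = v then p v + p w + e - t w
    else if x = w then t w - e else p x with hp'def
  have hp'v : p' v = p v + p w + e - t w := by simp [hp'def]
  have hp'w : p' w = t w - e := by simp [hp'def, hvw.symm]
  have hagree : ∀ x, x ≠ v → x ≠ w → p' x = p x := by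
    intro x h1 h2; simp [hp'def, h1, h2]
  -- deficiency facts
  have hdv : t v - p v ≤ (kInfl m t p ℓ).card - 1 := by
    have := kInfl_def_le m t p ℓ v hvS
    rwa [card_erase_of_mem hvS] at this
  have hScard : 1 ≤ (kInfl m t p ℓ).card := card_pos.2 ⟨v, hvS⟩
  have hdwS : t w - p w ≤ (kInfl m t p ℓ).card := by
    have hmem : w ∈ kInfl m t p (ℓ+1) := hfull ▸ mem_range.2 hwm
    rw [kInfl_succ, mem_union] at hmem
    rcases hmem with h | h
    · exact absurd h hwS
    · rw [mem_filter] at h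
      have := h.2
      rwa [erase_eq_of_notMem hwS] at this
  -- basic bounds on p'
  have hp'le : ∀ x < m, p' x ≤ t x := by
    intro x hx
    rcases eq_or_ne x v with rfl | h1
    · rw [hp'v]; omega
    rcases eq_or_ne x w with rfl | h2
    · rw [hp'w]; omega
    · rw [hagree x h1 h2]; exact hp x hx
  have hd'w : t w - p' w ≤ t v - p v := by rw [hp'w]; omega
  have hswap := kInfl_swap m t p p' v w hvm hwm (by rw [hp'w]; omega) hd'w hagree
  have himg : (kInfl m t p ℓ).image (Equiv.swap v w) ⊆ kInfl m t p' ℓ := hswap ℓ hwS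
  refine ⟨p', hp'le, ?_, ?_, ?_⟩
  · -- full coverage
    refine Subset.antisymm (kInfl_subset_range _ _ _ _) ?_
    intro y hy
    by_cases hyS : Equiv.swap v w y ∈ kInfl m t p ℓ
    · have : y ∈ (kInfl m t p ℓ).image (Equiv.swap v w) := (mem_image_swap _ _ _ _).2 hyS
      exact kInfl_mono m t p' (Nat.le_succ ℓ) (himg this)
    · have hynot : y ∉ (kInfl m t p ℓ).image (Equiv.swap v w) := by
        rw [mem_image_swap]; exact hyS
      have hcard : (kInfl m t p ℓ).card ≤ ((kInfl m t p' ℓ).erase y).card := by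
        have hsub : (kInfl m t p ℓ).image (Equiv.swap v w) ⊆ (kInfl m t p' ℓ).erase y :=
          (subset_erase).2 ⟨himg, hynot⟩
        have := card_le_card hsub
        rwa [card_image_of_injective _ (Equiv.injective _)] at this
      have hym : y < m := mem_range.1 hy
      have hbound : t y - p' y ≤ (kInfl m t p ℓ).card := by
        rcases eq_or_ne y v with rfl | h1
        · -- swap y = w ∉ S
          rw [hp'v]; omega
        rcases eq_or_ne y w with rfl | h2
        · rw [Equiv.swap_apply_right] at hyS; exact absurd hvS hyS
        · rw [hagree y h1 h2]
          have hymem : y ∈ kInfl m t p (ℓ+1) := hfull ▸ hy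
          rw [kInfl_succ, mem_union] at hymem
          have hynS : y ∉ kInfl m t p ℓ := by
            rwa [Equiv.swap_apply_of_ne_of_ne h1 h2] at hyS
          rcases hymem with h | h
          · exact absurd h hynS
          · rw [mem_filter] at h
            have := h.2
            rwa [erase_eq_of_notMem hynS] at this
      rw [kInfl_succ]
      exact mem_union_right _ (mem_filter.2 ⟨hy, hbound.trans hcard⟩)
  · -- cost preserved
    rw [sum_two_point (range m) p' v w (mem_range.2 hvm) (mem_range.2 hwm) hvw,
      sum_two_point (range m) p v w (mem_range.2 hvm) (mem_range.2 hwm) hvw]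
    have hsame : ∑ x ∈ ((range m).erase v).erase w, p' x
        = ∑ x ∈ ((range m).erase v).erase w, p x := by
      refine sum_congr rfl fun x hx => ?_
      rw [mem_erase, mem_erase] at hx
      exact hagree x hx.2.1 hx.1
    rw [hsame, hp'v, hp'w]
    omega
  · -- measure decreases
    have hstep : ∑ x ∈ range m \ kInfl m t p' ℓ, (m - x) ≤
        ∑ x ∈ range m \ (kInfl m t p ℓ).image (Equiv.swap v w), (m - x) :=
      sum_le_sum_of_subset (sdiff_subset_sdiff (Finset.Subset.refl _) himg)
    refine lt_of_le_of_lt hstep ?_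
    have hset : range m \ (kInfl m t p ℓ).image (Equiv.swap v w)
        = insert v ((range m \ kInfl m t p ℓ).erase w) := by
      ext x
      simp only [mem_sdiff, mem_image_swap, mem_insert, mem_erase, mem_range]
      constructor
      · rintro ⟨hxm, hxs⟩
        rcases eq_or_ne x v with rfl | h1
        · exact Or.inl rfl
        rcases eq_or_ne x w with rfl | h2
        · rw [Equiv.swap_apply_right] at hxs; exact absurd hvS hxs
        · rw [Equiv.swap_apply_of_ne_of_ne h1 h2] at hxs
          exact Or.inr ⟨h2, hxm, hxs⟩
      · rintro (rfl | ⟨h2, hxm, hxs⟩)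
        · rw [Equiv.swap_apply_left]; exact ⟨hvm, hwS⟩
        · rcases eq_or_ne x v with rfl | h1
          · exact absurd hvS hxs
          · rw [Equiv.swap_apply_of_ne_of_ne h1 h2]; exact ⟨hxm, hxs⟩
    rw [hset]
    have hvnot : v ∉ (range m \ kInfl m t p ℓ).erase w := by
      rw [mem_erase, mem_sdiff]
      rintro ⟨-, -, hvs⟩; exact hvs hvS
    rw [sum_insert hvnot]
    have hwmem : w ∈ range m \ kInfl m t p ℓ := mem_sdiff.2 ⟨mem_range.2 hwm, hwS⟩
    rw [← Finset.add_sum_erase _ _ hwmem]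
    have : m - v < m - w := by omega
    omega

lemma partB (m ℓ : ℕ) (t : ℕ → ℕ) (hm1 : 1 ≤ m)
    (hmono : ∀ i j, i ≤ j → j < m → t i ≤ t j) :
    ∀ N : ℕ, ∀ p : ℕ → ℕ, (∀ x < m, p x ≤ t x) → kInfl m t p (ℓ+1) = range m →
      (∑ x ∈ range m \ kInfl m t p ℓ, (m - x)) ≤ N →
      ∃ j, 1 ≤ j ∧ j ≤ m ∧
        kOpt t ℓ j + ∑ i ∈ Ico j m, (t i - j) ≤ ∑ x ∈ range m, p x := by
  intro N
  induction N using Nat.strong_induction_on with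
  | _ N ih =>
    intro p hp hfull hμ
    by_cases hpair : ∃ v ∈ kInfl m t p ℓ, ∃ w, w < v ∧ w ∉ kInfl m t p ℓ
    · obtain ⟨v, hvS, w, hwv, hwS⟩ := hpair
      have hvm : v < m := mem_range.1 (kInfl_subset_range m t p ℓ hvS)
      obtain ⟨p', hp', hfull', hsum', hμ'⟩ :=
        exchange m ℓ t p hp hfull v w hwv hvm hvS hwS (hmono w v hwv.le hvm)
      have hlt : (∑ x ∈ range m \ kInfl m t p' ℓ, (m - x)) < N := lt_of_lt_of_le hμ' hμ
      obtain ⟨j, h1, h2, h3⟩ := ih _ hlt p' hp' hfull' le_rfl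
      exact ⟨j, h1, h2, by rw [← hsum']; exact h3⟩
    · push_neg at hpair
      have hdown : ∀ v ∈ kInfl m t p ℓ, ∀ w, w < v → w ∈ kInfl m t p ℓ := by
        intro v hv w hw
        by_contra hc
        exact hc (hpair v hv w hw)
      -- nonempty
      have hS0 : (kInfl m t p ℓ).Nonempty := by
        rcases (kInfl m t p ℓ).eq_empty_or_nonempty with hE | h
        · exfalso
          have h0 : (0:ℕ) ∈ kInfl m t p (ℓ+1) := hfull ▸ mem_range.2 hm1
          rw [kInfl_succ, mem_union] at h0
          rcases h0 with h0 | h0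
          · rw [hE] at h0; exact notMem_empty 0 h0
          · rw [mem_filter] at h0
            have hc0 : ((kInfl m t p ℓ).erase 0).card = 0 := by rw [hE]; simp
            have hb := h0.2
            rw [hc0] at hb
            have hp0 : p 0 = t 0 := by have := hp 0 hm1; omega
            have h00 : (0:ℕ) ∈ kInfl m t p 0 := by
              rw [kInfl_zero, mem_filter]
              exact ⟨mem_range.2 hm1, hp0⟩
            have := kInfl_mono m t p (Nat.zero_le ℓ) h00
            rw [hE] at this; exact notMem_empty 0 this
        · exact h
      have hSsub : kInfl m t p ℓ ⊆ range m := kInfl_subset_range m t p ℓ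
      have hjm : (kInfl m t p ℓ).card ≤ m := by
        have := card_le_card hSsub; rwa [card_range] at this
      have hj1 : 1 ≤ (kInfl m t p ℓ).card := card_pos.2 hS0
      have hSrange : kInfl m t p ℓ = range (kInfl m t p ℓ).card := by
        have hsub : range (kInfl m t p ℓ).card ⊆ kInfl m t p ℓ := by
          intro x hx
          by_contra hxS
          have hsl : kInfl m t p ℓ ⊆ range x := by
            intro y hy
            rw [mem_range]
            by_contra hyx
            push_neg at hyx
            rcases eq_or_lt_of_le hyx with rfl | hlt
            · exact hxS hy
            · exact hxS (hdown y hy x hlt)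
          have := card_le_card hsl
          rw [card_range] at this
          rw [mem_range] at hx; omega
        exact (eq_of_subset_of_card_le hsub (by rw [card_range])).symm
      set j := (kInfl m t p ℓ).card with hjdef
      refine ⟨j, hj1, hjm, ?_⟩
      have hsmall : kInfl j t p ℓ = range j := by
        refine Subset.antisymm (kInfl_subset_range j t p ℓ) ?_
        have := kInfl_restrict m j t p ℓ (by rw [← hSrange]) ℓ le_rfl
        rw [← hSrange]
        exact this
      have hopt : kOpt t ℓ j ≤ ∑ x ∈ range j, p x :=
        kOpt_le t ℓ j p (fun x hx => hp x (lt_of_lt_of_le hx hjm)) hsmall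
      have hbig : ∀ i ∈ Ico j m, t i - j ≤ p i := by
        intro i hi
        rw [mem_Ico] at hi
        have hiS : i ∉ kInfl m t p ℓ := by
          rw [hSrange, mem_range]; omega
        have him : i ∈ kInfl m t p (ℓ+1) := hfull ▸ mem_range.2 hi.2
        rw [kInfl_succ, mem_union] at him
        rcases him with h | h
        · exact absurd h hiS
        · rw [mem_filter] at h
          have hb := h.2
          rw [erase_eq_of_notMem hiS] at hb
          have := hp i hi.2
          omega
      have hsplit : ∑ x ∈ range j, p x + ∑ x ∈ Ico j m, p x = ∑ x ∈ range m, p x := by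
        simp only [range_eq_Ico]
        exact sum_Ico_consecutive _ (Nat.zero_le j) hjm
      calc kOpt t ℓ j + ∑ i ∈ Ico j m, (t i - j)
          ≤ ∑ x ∈ range j, p x + ∑ i ∈ Ico j m, p i := add_le_add hopt (sum_le_sum hbig)
        _ = ∑ x ∈ range m, p x := hsplit

lemma partA (m ℓ j : ℕ) (t : ℕ → ℕ) (hjm : j ≤ m) :
    kOpt t (ℓ+1) m ≤ kOpt t ℓ j + ∑ i ∈ Ico j m, (t i - j) := by
  obtain ⟨q, hq, hqfull, hqcost⟩ := kOpt_mem t ℓ j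
  set p : ℕ → ℕ := fun x => if x < j then q x else t x - j with hpdef
  have hagree : ∀ x < j, q x = p x := fun x hx => by simp [hpdef, hx]
  have hsub : ∀ r, kInfl j t q r ⊆ kInfl m t p r := kInfl_mono_graph t q p hjm hagree
  have hrj : range j ⊆ kInfl m t p ℓ := by rw [← hqfull]; exact hsub ℓ
  have hfull : kInfl m t p (ℓ+1) = range m := by
    refine Subset.antisymm (kInfl_subset_range _ _ _ _) ?_
    intro x hx
    have hxm := mem_range.1 hx
    by_cases hxj : x < j
    · rw [kInfl_succ]
      exact mem_union_left _ (hrj (mem_range.2 hxj))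
    · rw [kInfl_succ]
      refine mem_union_right _ (mem_filter.2 ⟨hx, ?_⟩)
      have hpx : p x = t x - j := by simp [hpdef, hxj]
      have hcard : j ≤ ((kInfl m t p ℓ).erase x).card := by
        have hss : range j ⊆ (kInfl m t p ℓ).erase x :=
          (subset_erase).2 ⟨hrj, fun h => hxj (mem_range.1 h)⟩
        calc j = (range j).card := (card_range j).symm
          _ ≤ _ := card_le_card hss
      have h1 : t x - p x ≤ j := by rw [hpx]; omega
      exact h1.trans hcard
  have hple : ∀ x < m, p x ≤ t x := by
    intro x hx
    by_cases h : x < j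
    · rw [← hagree x h]; exact hq x h
    · have : p x = t x - j := by simp [hpdef, h]
      rw [this]; exact Nat.sub_le _ _
  have hcost : ∑ x ∈ range m, p x = ∑ x ∈ range j, q x + ∑ i ∈ Ico j m, (t i - j) := by
    have hsp : ∑ x ∈ range j, p x + ∑ x ∈ Ico j m, p x = ∑ x ∈ range m, p x := by
      simp only [range_eq_Ico]
      exact sum_Ico_consecutive _ (Nat.zero_le j) hjm
    rw [← hsp]
    congr 1
    · exact sum_congr rfl fun x hx => (hagree x (mem_range.1 hx)).symm
    · refine sum_congr rfl fun i hi => ?_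
      rw [mem_Ico] at hi
      simp [hpdef, Nat.not_lt.2 hi.1]
  have := kOpt_le t (ℓ+1) m p hple hfull
  rw [hcost, ← hqcost] at this
  exact this

/-- the recurrence
`Opt_ℓ(m) = min_{1 ≤ j ≤ m} (Opt_{ℓ-1}(j) + Σ_{i=j+1}^m max{0, t(v_i) - j})`
(in 0-based indexing, the sum is over `i ∈ [j, m)` with truncated subtraction). -/
theorem clique_opt_recurrence (n lam ℓ m : ℕ) (t : ℕ → ℕ)
    (hl1 : 1 ≤ ℓ) (hl2 : ℓ ≤ lam) (hm1 : 1 ≤ m) (hmn : m ≤ n)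
    (hmono : ∀ i j, i ≤ j → j < n → t i ≤ t j)
    (hbd : ∀ v < n, 1 ≤ t v ∧ t v ≤ n - 1) :
    kOpt t ℓ m =
      ((Icc 1 m).image fun j => kOpt t (ℓ - 1) j + ∑ i ∈ Ico j m, (t i - j)).min'
        ((Finset.nonempty_Icc.mpr hm1).image _) := by

  obtain ⟨k, rfl⟩ : ∃ k, ℓ = k + 1 := ⟨ℓ - 1, by omega⟩
  have hk : k + 1 - 1 = k := rfl
  apply le_antisymm
  · have hmem := Finset.min'_mem
      ((Icc 1 m).image fun j => kOpt t (k + 1 - 1) j + ∑ i ∈ Ico j m, (t i - j))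
      ((Finset.nonempty_Icc.mpr hm1).image _)
    rw [mem_image] at hmem
    obtain ⟨j, hj, hje⟩ := hmem
    rw [← hje]
    rw [mem_Icc] at hj
    exact partA m k j t hj.2
  · obtain ⟨p, hp, hfull, hcost⟩ := kOpt_mem t (k+1) m
    have hmono' : ∀ i j, i ≤ j → j < m → t i ≤ t j :=
      fun i j hij hj => hmono i j hij (lt_of_lt_of_le hj hmn)
    obtain ⟨j, h1, h2, h3⟩ := partB m k t hm1 hmono' _ p hp hfull le_rfl
    have hmle : ((Icc 1 m).image fun j => kOpt t (k + 1 - 1) j + ∑ i ∈ Ico j m, (t i - j)).min'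
        ((Finset.nonempty_Icc.mpr hm1).image _) ≤ kOpt t k j + ∑ i ∈ Ico j m, (t i - j) :=
      min'_le _ _ (mem_image_of_mem _ (mem_Icc.2 ⟨h1, h2⟩))
    rw [hcost]
    exact hmle.trans h3
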